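/- Let $\hat\sigma \in [0,1/2)$, $\theta = \frac{(1-\hat\sigma)(1-2\hat\sigma)}{2}$, $\hat\theta = \frac{1-2\hat\sigma}{4}$, $L > 0$, $\eta = \frac{4\theta}{L}$, and let $\tau$ be the smallest root of $\theta t^2 - (2\theta + \frac{\eta L}{2})t + \theta - \hat\theta = 0$. Then $\tau > \frac{1 - 2\hat\sigma}{8(1-\hat\sigma)}$ and $\tau\eta > \frac{(1-2\hat\sigma)^2}{4L}$. -/

import Mathlib

theorem stmt_14 (σh L θ θh η τ : ℝ) (hσ0 : 0 ≤ σh) (hσ1 : σh < 1/2) (hL : 0 < L)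
    (hθ : θ = (1 - σh) * (1 - 2*σh) / 2) (hθh : θh = (1 - 2*σh) / 4)
    (hη : η = 4*θ/L)
    (hτ : τ = 2*(θ - θh) /
      (2*θ + η*L/2 + Real.sqrt ((2*θ + η*L/2)^2 - 4*θ*(θ - θh)))) :
    τ > (1 - 2*σh) / (8*(1 - σh)) ∧ τ * η > (1 - 2*σh)^2 / (4*L) := by
  have ha : 0 < 1 - 2*σh := by linarith
  have hb : 0 < 1 - σh := by linarith
  have hθpos : 0 < θ := by rw [hθ]; positivity
  have hdiff : θ - θh = (1-2*σh)^2/4 := by rw [hθ, hθh]; ring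
  have hdpos : 0 < θ - θh := by rw [hdiff]; positivity
  have hηL : η * L / 2 = 2*θ := by rw [hη]; field_simp; ring
  have harg : (2*θ + η*L/2)^2 - 4*θ*(θ - θh) = 16*θ^2 - 4*θ*(θ-θh) := by
    rw [hηL]; ring
  set S := Real.sqrt ((2*θ + η*L/2)^2 - 4*θ*(θ - θh)) with hS
  have hSnn : 0 ≤ S := Real.sqrt_nonneg _
  have hSlt : S < 4*θ := by
    rw [hS, harg]
    refine (Real.sqrt_lt' (by positivity)).mpr ?_
    nlinarith
  have hDpos : 0 < 2*θ + η*L/2 + S := by rw [hηL]; linarith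
  have hτgt : τ > (θ - θh)/(4*θ) := by
    rw [hτ, gt_iff_lt, div_lt_div_iff₀ (by positivity) hDpos]
    nlinarith
  have heq : (θ - θh)/(4*θ) = (1 - 2*σh) / (8*(1 - σh)) := by
    rw [hdiff, hθ]; field_simp; ring
  have hηpos : 0 < η := by rw [hη]; positivity
  constructor
  · linarith [heq ▸ hτgt]
  · have : τ * η > ((θ - θh)/(4*θ)) * η := by
      exact mul_lt_mul_of_pos_right hτgt hηpos
    have heq2 : ((θ - θh)/(4*θ)) * η = (1 - 2*σh)^2 / (4*L) := by
      rw [hdiff, hη]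
      field_simp
    linarith [heq2 ▸ this]
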